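/- Let n ≥ 1 and define b : ℕ → ℝ by b(k) = (1 + (−1)^k)/2 + ⌊(k mod 2n)/n⌋ + 2·⌊k/(2n)⌋. Then for every t ∈ ℂ with |t| < 1, ∑_{k≥0} b(k)·t^k = (1 + t^{n+1}) / [(1 − t²)(1 − t^n)]. Consequently, substituting t → t², the coefficients a(k) of the Molien series (1 + t^{2n+2})/((1 − t⁴)(1 − t^{2n})) of the binary dihedral orbifold ℂ²/D̂_{n+2} satisfy a(k) = 0 for k odd and a(k) = b(k/2) for k even. -/

import Mathlib

open Complex

lemma even_part (t : ℂ) (ht : ‖t‖ < 1) :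
    HasSum (fun k : ℕ => (if Even k then (1 : ℂ) else 0) * t ^ k) (1 - t ^ 2)⁻¹ := by
  have h2 : ‖t ^ 2‖ < 1 := by
    rw [norm_pow]; exact pow_lt_one₀ (norm_nonneg t) ht two_ne_zero
  have hg := hasSum_geometric_of_norm_lt_one h2
  have hinj : Function.Injective (fun m : ℕ => 2 * m) :=
    fun a b h => Nat.eq_of_mul_eq_mul_left two_pos h
  refine (hinj.hasSum_iff ?_).mp ?_
  · intro k hk
    have : ¬ Even k := by rintro ⟨m, rfl⟩; exact hk ⟨m, (two_mul m)⟩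
    simp [this]
  · refine hg.congr_fun fun m => ?_
    simp [Function.comp, pow_mul, even_two_mul]

set_option maxHeartbeats 1000000 in
lemma div_part (n : ℕ) (hn : 1 ≤ n) (t : ℂ) (ht : ‖t‖ < 1) :
    HasSum (fun k : ℕ => ((k / n : ℕ) : ℂ) * t ^ k) (t ^ n / ((1 - t) * (1 - t ^ n))) := by
  have : NeZero n := ⟨by omega⟩
  have hnt : ‖t ^ n‖ < 1 := by
    rw [norm_pow]; exact pow_lt_one₀ (norm_nonneg t) ht (by omega)
  have ht1 : t ≠ 1 := by rintro rfl; simp at ht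
  have h1 : (1 : ℂ) - t ≠ 0 := sub_ne_zero.mpr (Ne.symm ht1)
  have h2 : (1 : ℂ) - t ^ n ≠ 0 := by
    refine sub_ne_zero.mpr fun h => ?_
    rw [← h] at hnt; simp at hnt
  have hf1 : HasSum (fun q : ℕ => (q : ℂ) * (t ^ n) ^ q) (t ^ n / (1 - t ^ n) ^ 2) :=
    hasSum_coe_mul_geometric_of_norm_lt_one hnt
  have hf2 : HasSum (fun r : Fin n => t ^ (r : ℕ)) ((t ^ n - 1) / (t - 1)) := by
    have := hasSum_fintype (fun r : Fin n => t ^ (r : ℕ))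
    rwa [Fin.sum_univ_eq_sum_range, geom_sum_eq ht1] at this
  have hsum : Summable fun p : ℕ × Fin n => ((p.1 : ℂ) * (t ^ n) ^ p.1) * t ^ (p.2 : ℕ) := by
    apply summable_mul_of_summable_norm (f := fun q : ℕ => (q : ℂ) * (t ^ n) ^ q)
      (g := fun r : Fin n => t ^ (r : ℕ))
    · have : Summable fun q : ℕ => (q : ℝ) * ‖t ^ n‖ ^ q :=
        (hasSum_coe_mul_geometric_of_norm_lt_one (by rwa [Real.norm_eq_abs, abs_norm])).summable
      refine this.congr fun q => ?_
      simp [norm_pow, abs_of_nonneg]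
    · exact .of_finite
  have hprod := hf1.mul hf2 hsum
  have npos : 0 < n := hn
  rw [← Equiv.hasSum_iff (Nat.divModEquiv n).symm]
  have hfun : (fun k : ℕ => ((k / n : ℕ) : ℂ) * t ^ k) ∘ (Nat.divModEquiv n).symm
      = fun p : ℕ × Fin n =>
        (fun q : ℕ => (q : ℂ) * (t ^ n) ^ q) p.1 * (fun r : Fin n => t ^ (r : ℕ)) p.2 := by
    funext p
    obtain ⟨q, r⟩ := p
    simp only [Function.comp_apply, Nat.divModEquiv_symm_apply]
    have hdiv : (q * n + (r : ℕ)) / n = q := by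
      rw [mul_comm, Nat.mul_add_div npos, Nat.div_eq_of_lt r.isLt, add_zero]
    rw [hdiv, pow_add, pow_mul]
    ring
  have hval : (t ^ n / (1 - t ^ n) ^ 2) * ((t ^ n - 1) / (t - 1))
      = t ^ n / ((1 - t) * (1 - t ^ n)) := by
    rw [show (t ^ n - 1) / (t - 1) = (1 - t ^ n) / (1 - t) by
      rw [div_eq_div_iff (sub_ne_zero.mpr ht1) h1]; ring]
    rw [div_mul_div_comm, sq]
    rw [div_eq_div_iff (by exact mul_ne_zero (mul_ne_zero h2 h2) h1)
      (mul_ne_zero h1 h2)]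
    ring
  rw [hfun, ← hval]
  exact hprod

lemma nat_div_split (n k : ℕ) (hn : 1 ≤ n) :
    (k % (2 * n)) / n + 2 * (k / (2 * n)) = k / n := by
  conv_rhs => rw [← Nat.mod_add_div k (2 * n)]
  rw [show 2 * n * (k / (2 * n)) = n * (2 * (k / (2 * n))) by ring,
    Nat.add_mul_div_left _ _ (by omega : 0 < n)]

lemma key (n : ℕ) (hn : 1 ≤ n) (t : ℂ) (ht : ‖t‖ < 1) :
    HasSum
      (fun k : ℕ =>
        ((1 + (-1 : ℂ) ^ k) / 2 + (((k % (2 * n)) / n : ℕ) : ℂ) +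
          2 * ((k / (2 * n) : ℕ) : ℂ)) * t ^ k)
      ((1 + t ^ (n + 1)) / ((1 - t ^ 2) * (1 - t ^ n))) := by
  have hE := even_part t ht
  have hD := div_part n hn t ht
  have ht1 : t ≠ 1 := by rintro rfl; simp at ht
  have h1 : (1 : ℂ) - t ≠ 0 := sub_ne_zero.mpr (Ne.symm ht1)
  have h2 : (1 : ℂ) - t ^ n ≠ 0 := by
    refine sub_ne_zero.mpr fun h => ?_
    have : ‖t ^ n‖ < 1 := by
      rw [norm_pow]; exact pow_lt_one₀ (norm_nonneg t) ht (by omega)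
    rw [← h] at this; simp at this
  have h12 : (1 : ℂ) - t ^ 2 ≠ 0 := by
    refine sub_ne_zero.mpr fun h => ?_
    have : ‖t ^ 2‖ < 1 := by
      rw [norm_pow]; exact pow_lt_one₀ (norm_nonneg t) ht two_ne_zero
    rw [← h] at this; simp at this
  have hval : (1 - t ^ 2)⁻¹ + t ^ n / ((1 - t) * (1 - t ^ n))
      = (1 + t ^ (n + 1)) / ((1 - t ^ 2) * (1 - t ^ n)) := by
    rw [inv_eq_one_div, div_add_div _ _ h12 (mul_ne_zero h1 h2),
      div_eq_div_iff (mul_ne_zero h12 (mul_ne_zero h1 h2)) (mul_ne_zero h12 h2)]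
    ring
  rw [← hval]
  refine (hE.add hD).congr_fun fun k => ?_
  have hc : (((k % (2 * n)) / n : ℕ) : ℂ) + 2 * ((k / (2 * n) : ℕ) : ℂ)
      = ((k / n : ℕ) : ℂ) := by
    rw [← nat_div_split n k hn]; push_cast; ring
  rcases Nat.even_or_odd k with he | ho
  · rw [Even.neg_one_pow he, if_pos he, ← hc]; ring
  · rw [Odd.neg_one_pow ho, if_neg (Nat.not_even_iff_odd.mpr ho), ← hc]; ring

theorem D_series_coefficients (n : ℕ) (hn : 1 ≤ n) (t : ℂ) (ht : ‖t‖ < 1) :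
    HasSum
      (fun k : ℕ =>
        ((1 + (-1 : ℂ) ^ k) / 2 + (((k % (2 * n)) / n : ℕ) : ℂ) +
          2 * ((k / (2 * n) : ℕ) : ℂ)) * t ^ k)
      ((1 + t ^ (n + 1)) / ((1 - t ^ 2) * (1 - t ^ n))) ∧
    HasSum
      (fun k : ℕ =>
        (if Even k then
          ((1 + (-1 : ℂ) ^ (k / 2)) / 2 + ((((k / 2) % (2 * n)) / n : ℕ) : ℂ) +
            2 * (((k / 2) / (2 * n) : ℕ) : ℂ))
         else 0) * t ^ k)
      ((1 + t ^ (2 * n + 2)) / ((1 - t ^ 4) * (1 - t ^ (2 * n)))) := by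
  refine ⟨key n hn t ht, ?_⟩
  have ht2 : ‖t ^ 2‖ < 1 := by
    rw [norm_pow]; exact pow_lt_one₀ (norm_nonneg t) ht two_ne_zero
  have h := key n hn (t ^ 2) ht2
  have hv : (1 + (t ^ 2) ^ (n + 1)) / ((1 - (t ^ 2) ^ 2) * (1 - (t ^ 2) ^ n))
      = (1 + t ^ (2 * n + 2)) / ((1 - t ^ 4) * (1 - t ^ (2 * n))) := by
    rw [← pow_mul, ← pow_mul, ← pow_mul]
    norm_num [mul_comm, mul_add]
    rw [show (n + 1) * 2 = n * 2 + 2 by ring]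
  rw [hv] at h
  have hinj : Function.Injective (fun m : ℕ => 2 * m) :=
    fun a b h => Nat.eq_of_mul_eq_mul_left two_pos h
  refine (hinj.hasSum_iff ?_).mp ?_
  · intro k hk
    have : ¬ Even k := by rintro ⟨m, rfl⟩; exact hk ⟨m, (two_mul m)⟩
    simp [this]
  · refine h.congr_fun fun m => ?_
    simp only [Function.comp_apply]
    rw [if_pos (even_two_mul m), Nat.mul_div_cancel_left m two_pos, pow_mul]
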